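/- In the alternating group Alt_5, let H_1 = Stab({2}) (≅ Alt_4), H_2 = the normalizer of the cyclic group generated by (1,2,3,4,5) (≅ D_5), and H_3 = the normalizer of the cyclic group generated by (1,3,5) (≅ D_3). Then the coset complex CC(Alt_5, {H_1,H_2,H_3}) has exactly 21 vertices, 80 edges, and 60 two-dimensional simplices. -/

import Mathlib

set_option maxRecDepth 1000000


open scoped ContinuousMap Pointwise

set_option maxHeartbeats 1000000
set_option synthInstance.maxHeartbeats 1000000

universe u v

/-- An abstract simplicial complex on a vertex type `V`. -/
structure AbsSimplicialComplex (V : Type u) where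
  faces : Set (Finset V)
  nonempty_of_mem : ∀ {s : Finset V}, s ∈ faces → s.Nonempty
  down_closed : ∀ {s t : Finset V}, s ∈ faces → t ⊆ s → t.Nonempty → t ∈ faces

namespace AbsSimplicialComplex

variable {V : Type u}

/-- The vertices of an abstract simplicial complex. -/
def vertices (X : AbsSimplicialComplex V) : Set V := {v | {v} ∈ X.faces}

/-- `X` has dimension `d`. -/
def Dim (X : AbsSimplicialComplex V) (d : ℕ) : Prop :=
  (∀ s ∈ X.faces, s.card ≤ d + 1) ∧ ∃ s ∈ X.faces, s.card = d + 1

/-- A facet is a maximal simplex. -/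
def IsFacet (X : AbsSimplicialComplex V) (s : Finset V) : Prop :=
  s ∈ X.faces ∧ ∀ t ∈ X.faces, s ⊆ t → t = s

/-- A complex is pure of dimension `d` if all its facets have dimension `d`. -/
def IsPure (X : AbsSimplicialComplex V) (d : ℕ) : Prop :=
  (∀ s ∈ X.faces, s.card ≤ d + 1) ∧ ∀ s, X.IsFacet s → s.card = d + 1

/-- The link of a simplex `σ`. -/
def link [DecidableEq V] (X : AbsSimplicialComplex V) (σ : Finset V) :
    AbsSimplicialComplex V where
  faces := {t | Disjoint t σ ∧ t ∪ σ ∈ X.faces ∧ t.Nonempty}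
  nonempty_of_mem h := h.2.2
  down_closed := by
    rintro s t ⟨hd, hu, -⟩ hts htne
    refine ⟨Finset.disjoint_of_subset_left hts hd, ?_, htne⟩
    exact X.down_closed hu (Finset.union_subset_union_left hts)
      ⟨htne.choose, Finset.mem_union_left _ htne.choose_spec⟩

/-- The geometric realisation of an abstract simplicial complex, as the set of
convex-combination functions supported on a face. -/
abbrev geomReal (X : AbsSimplicialComplex V) : Type u :=
  {f : V → ℝ // ∃ s ∈ X.faces, (∀ v ∉ s, f v = 0) ∧ (∀ v, 0 ≤ f v) ∧ ∑ v ∈ s, f v = 1}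

/-- The support of a point of the geometric realisation. -/
def ptSupport {X : AbsSimplicialComplex V} (p : geomReal X) : Set V := {v | p.1 v ≠ 0}

/-- The complement `|X| \ |X^{(s)}|` of the `s`-skeleton in the geometric realisation:
the points whose open simplex has dimension `> s`. -/
abbrev complementSkeleton (X : AbsSimplicialComplex V) (s : ℤ) : Type u :=
  {p : geomReal X // s + 2 ≤ (Set.ncard (ptSupport p) : ℤ)}

/-- The barycentric subdivision: simplices are chains of faces of `X`. -/
def barySubdiv (X : AbsSimplicialComplex V) : AbsSimplicialComplex (Finset V) where
  faces := {c | c.Nonempty ∧ (∀ s ∈ c, s ∈ X.faces) ∧ IsChain (· ⊆ ·) (c : Set (Finset V))}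
  nonempty_of_mem h := h.1
  down_closed := by
    rintro c d ⟨-, hmem, hchain⟩ hdc hdne
    exact ⟨hdne, fun s hs => hmem s (hdc hs), IsChain.mono (Finset.coe_subset.mpr hdc) hchain⟩

/-- Two facets are adjacent if they intersect in a codimension-one face. -/
def Adjacent [DecidableEq V] (X : AbsSimplicialComplex V) (s t : Finset V) : Prop :=
  X.IsFacet s ∧ X.IsFacet t ∧ s ≠ t ∧ (s ∩ t).card + 1 = s.card

/-- A chamber complex: any two facets are connected by a gallery. -/
def IsChamberComplex [DecidableEq V] (X : AbsSimplicialComplex V) : Prop :=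
  ∀ s t, X.IsFacet s → X.IsFacet t → Relation.ReflTransGen X.Adjacent s t

/-- The chamber graph of a complex, as a 1-dimensional simplicial complex. -/
def chamberGraph [DecidableEq V] (X : AbsSimplicialComplex V) :
    AbsSimplicialComplex (Finset V) where
  faces := {p | p.Nonempty ∧ p.card ≤ 2 ∧ (∀ F ∈ p, X.IsFacet F) ∧
      ∀ F ∈ p, ∀ F' ∈ p, F = F' ∨ X.Adjacent F F'}
  nonempty_of_mem h := h.1
  down_closed := by
    rintro p q ⟨-, hcard, hfac, hadj⟩ hqp hqne
    exact ⟨hqne, le_trans (Finset.card_le_card hqp) hcard,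
      fun F hF => hfac F (hqp hF), fun F hF F' hF' => hadj F (hqp hF) F' (hqp hF')⟩

end AbsSimplicialComplex

open AbsSimplicialComplex

/-- `n`-connectedness of a topological space (`n = -1` meaning nonempty). -/
def IsNConnectedSpace (X : Type*) [TopologicalSpace X] (n : ℤ) : Prop :=
  (-1 ≤ n → Nonempty X) ∧
    ∀ k : ℕ, (k : ℤ) ≤ n → ∀ x : X, Subsingleton (HomotopyGroup (Fin k) X x)

/-- The basepoint of the `n`-sphere. -/
noncomputable def spherePoint (n : ℕ) :
    Metric.sphere (0 : EuclideanSpace ℝ (Fin (n + 1))) 1 :=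
  ⟨EuclideanSpace.single 0 1, by simp⟩

/-- The wedge of a family of `n`-spheres indexed by `ι` (a point if `ι` is empty). -/
def WedgeOfSpheres (ι : Type) (n : ℕ) : Type :=
  Quotient (Relation.EqvGen.setoid
    (fun (a b : (Σ _ : ι, Metric.sphere (0 : EuclideanSpace ℝ (Fin (n + 1))) 1) ⊕ Unit) =>
      ∃ i, a = Sum.inl ⟨i, spherePoint n⟩ ∧ b = Sum.inr ()))

noncomputable instance (ι : Type) (n : ℕ) : TopologicalSpace (WedgeOfSpheres ι n) :=
  inferInstanceAs (TopologicalSpace (Quotient _))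

/-- A space is `m`-spherical if it is homotopy equivalent to a wedge of `m`-spheres. -/
def IsSpherical (m : ℕ) (X : Type*) [TopologicalSpace X] : Prop :=
  ∃ ι : Type, Nonempty (X ≃ₕ WedgeOfSpheres ι m)

namespace AbsSimplicialComplex

variable {V : Type u}

/-- Ordered simplices: tuples of vertices spanning a face. -/
def OrderedSimplex [DecidableEq V] (X : AbsSimplicialComplex V) (n : ℕ) : Type u :=
  {σ : Fin (n + 1) → V // Finset.image σ Finset.univ ∈ X.faces}

/-- The simplicial `n`-chains with coefficients in `R`. -/
abbrev Chains (R : Type v) [CommRing R] [DecidableEq V] (X : AbsSimplicialComplex V)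
    (n : ℕ) : Type (max u v) := OrderedSimplex X n →₀ R

/-- The `i`-th face of an ordered simplex. -/
def faceMap [DecidableEq V] {X : AbsSimplicialComplex V} {n : ℕ}
    (σ : OrderedSimplex X (n + 1)) (i : Fin (n + 2)) : OrderedSimplex X n :=
  ⟨σ.1 ∘ i.succAbove, by
    refine X.down_closed σ.2 ?_ (Finset.univ_nonempty.image _)
    intro v hv
    simp only [Finset.mem_image, Function.comp_apply] at hv ⊢
    obtain ⟨j, -, rfl⟩ := hv
    exact ⟨i.succAbove j, Finset.mem_univ _, rfl⟩⟩

/-- The simplicial boundary map. -/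
noncomputable def boundary (R : Type*) [CommRing R] [DecidableEq V]
    (X : AbsSimplicialComplex V) (n : ℕ) : Chains R X (n + 1) →ₗ[R] Chains R X n :=
  Finsupp.lsum R fun σ => LinearMap.toSpanSingleton R _
    (∑ i : Fin (n + 2), ((-1 : R) ^ (i : ℕ)) • Finsupp.single (faceMap σ i) (1 : R))

/-- The augmentation map. -/
noncomputable def augmentation (R : Type*) [CommRing R] [DecidableEq V]
    (X : AbsSimplicialComplex V) : Chains R X 0 →ₗ[R] R :=
  Finsupp.lsum R fun _ => LinearMap.id

/-- Quotient `ker f / (im g ∩ ker f)`, used to define homology. -/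
noncomputable def homologyOf {R M N P : Type*} [CommRing R] [AddCommGroup M]
    [AddCommGroup N] [AddCommGroup P] [Module R M] [Module R N] [Module R P]
    (f : M →ₗ[R] P) (g : N →ₗ[R] M) : Type _ :=
  LinearMap.ker f ⧸ Submodule.comap (LinearMap.ker f).subtype (LinearMap.range g)

/-- Reduced simplicial homology of `X` with coefficients in `R`. -/
noncomputable def reducedHomology (R : Type v) [CommRing R] [DecidableEq V]
    (X : AbsSimplicialComplex V) : ℕ → Type _
  | 0 => homologyOf (augmentation R X) (boundary R X 0)
  | (n + 1) => homologyOf (boundary R X n) (boundary R X (n + 1))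

/-- `X` is `m`-acyclic over `R`: reduced homology vanishes in degrees `≤ m`
(and `X` is nonempty if `m ≥ -1`). -/
def IsAcyclicTo (R : Type*) [CommRing R] [DecidableEq V] (X : AbsSimplicialComplex V)
    (m : ℤ) : Prop :=
  (-1 ≤ m → X.faces.Nonempty) ∧
    ∀ i : ℕ, (i : ℤ) ≤ m → Subsingleton (reducedHomology R X i)

/-- `X` is Cohen–Macaulay over `R`. -/
def IsCM (R : Type*) [CommRing R] [DecidableEq V] (X : AbsSimplicialComplex V)
    (d : ℕ) : Prop :=
  X.Dim d ∧ IsAcyclicTo R X ((d : ℤ) - 1) ∧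
    ∀ σ ∈ X.faces, IsAcyclicTo R (X.link σ) ((d : ℤ) - σ.card - 1)

/-- `X` is homotopy Cohen–Macaulay. -/
def IsHCM [DecidableEq V] (X : AbsSimplicialComplex V) (d : ℕ) : Prop :=
  X.Dim d ∧ IsNConnectedSpace (geomReal X) ((d : ℤ) - 1) ∧
    ∀ σ ∈ X.faces, IsNConnectedSpace (geomReal (X.link σ)) ((d : ℤ) - σ.card - 1)

end AbsSimplicialComplex

/-- The coset complex `CC(G, H)`: the nerve of the covering of `G` by the
left cosets of the subgroups in the family `H`. -/
def cosetComplex (G : Type*) [Group G] (H : Set (Subgroup G)) :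
    AbsSimplicialComplex (Set G) where
  faces := {s | s.Nonempty ∧ (∀ A ∈ s, ∃ g : G, ∃ K ∈ H, A = g • (K : Set G)) ∧
      (⋂ A ∈ s, (A : Set G)).Nonempty}
  nonempty_of_mem h := h.1
  down_closed := by
    rintro s t ⟨-, hco, ⟨x, hx⟩⟩ hts htne
    refine ⟨htne, fun A hA => hco A (hts hA), ⟨x, ?_⟩⟩
    simp only [Set.mem_iInter] at hx ⊢
    exact fun A hA => hx A (hts hA)


/-- The `5`-cycle `(1, 2, 3, 4, 5)` as an element of `Alt₅`. -/
def evenFiveCycle : alternatingGroup (Fin 5) :=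
  ⟨finRotate 5, Equiv.Perm.mem_alternatingGroup.2 (by decide)⟩

/-- The `3`-cycle `(1, 3, 5)` as an element of `Alt₅`. -/
def evenThreeCycle : alternatingGroup (Fin 5) :=
  ⟨Equiv.swap 0 2 * Equiv.swap 2 4, Equiv.Perm.mem_alternatingGroup.2 (by decide)⟩

/-- `H₁ = Stab({2}) ≅ Alt₄`. -/
def AltH1 : Subgroup ↥(alternatingGroup (Fin 5)) :=
  MulAction.stabilizer ↥(alternatingGroup (Fin 5)) (1 : Fin 5)

/-- `H₂ = N(⟨(1,2,3,4,5)⟩) ≅ D₅`. -/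
def AltH2 : Subgroup ↥(alternatingGroup (Fin 5)) :=
  Subgroup.normalizer (Subgroup.zpowers evenFiveCycle)

/-- `H₃ = N(⟨(1,3,5)⟩) ≅ D₃`. -/
def AltH3 : Subgroup ↥(alternatingGroup (Fin 5)) :=
  Subgroup.normalizer (Subgroup.zpowers evenThreeCycle)


-- === Auxiliary development for statement13 ===

abbrev G5 := ↥(alternatingGroup (Fin 5))

/-- An injective numeric encoding of elements of `Alt₅`. -/
def eN (x : G5) : ℕ :=
  ((x : Equiv.Perm (Fin 5)) 0).val + 8 * (((x : Equiv.Perm (Fin 5)) 1).val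
    + 8 * (((x : Equiv.Perm (Fin 5)) 2).val + 8 * ((x : Equiv.Perm (Fin 5)) 3).val))

theorem eN_inj : Function.Injective eN := by decide

def FS1 : Finset G5 := Finset.univ.filter (fun x => (x : Equiv.Perm (Fin 5)) 1 = 1)
def PS5 : Finset G5 := {1, evenFiveCycle, evenFiveCycle ^ 2, evenFiveCycle ^ 3, evenFiveCycle ^ 4}
def PS3 : Finset G5 := {1, evenThreeCycle, evenThreeCycle ^ 2}
def FS2 : Finset G5 := Finset.univ.filter (fun x => eN (x * evenFiveCycle * x⁻¹) ∈ PS5.image eN)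
def FS3 : Finset G5 := Finset.univ.filter (fun x => eN (x * evenThreeCycle * x⁻¹) ∈ PS3.image eN)

/-- The numeric model of the left coset `g • F`. -/
def cosetN (F : Finset G5) (g : G5) : Finset ℕ := F.image (fun h => eN (g * h))

def Vmod : Finset (Finset ℕ) :=
  Finset.univ.image (cosetN FS1) ∪ Finset.univ.image (cosetN FS2) ∪ Finset.univ.image (cosetN FS3)

def Vlist : List (List ℕ) :=
  [ [98, 163, 225, 547, 672, 738, 1057, 1123, 1248, 1570, 1632, 1697],
    [140, 202, 267, 1035, 1228, 1288, 1548, 1672, 1802, 2058, 2187, 2248],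
    [83, 212, 273, 532, 720, 787, 1553, 1620, 1808, 2067, 2128, 2257],
    [92, 153, 282, 538, 668, 792, 1052, 1112, 1305, 2073, 2138, 2200],
    [643, 708, 770, 1092, 1217, 1283, 1602, 1668, 1793, 2115, 2177, 2242],
    [98, 212, 538, 787, 1217, 1288, 1548, 1697, 2115, 2200],
    [92, 163, 532, 738, 1035, 1305, 1602, 1808, 2177, 2248],
    [140, 225, 643, 792, 1052, 1123, 1553, 1802, 2128, 2242],
    [153, 267, 720, 770, 1057, 1228, 1632, 1668, 2067, 2138],
    [202, 273, 672, 708, 1112, 1283, 1570, 1620, 2073, 2187],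
    [83, 282, 547, 668, 1092, 1248, 1672, 1793, 2058, 2257],
    [1570, 1632, 1697, 2073, 2138, 2200], [98, 163, 225, 2115, 2177, 2242],
    [547, 672, 738, 2058, 2187, 2248], [1057, 1123, 1248, 2067, 2128, 2257],
    [532, 720, 787, 1035, 1228, 1288], [538, 668, 792, 1548, 1672, 1802],
    [1052, 1112, 1305, 1553, 1620, 1808], [92, 153, 282, 1602, 1668, 1793],
    [140, 202, 267, 643, 708, 770], [83, 212, 273, 1092, 1217, 1283] ]

def goodT (t : List (List ℕ)) : Bool :=
  match t with
  | a :: rest => a.any fun x => rest.all fun b => decide (x ∈ b)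
  | [] => false

theorem keyV : (Vlist.map List.toFinset).toFinset = Vmod := by decide

theorem Vlist_nodup : Vlist.Nodup := by decide
theorem Vlist_map_nodup : (Vlist.map List.toFinset).Nodup := by decide

def dSet (B : Finset ℕ) : Set G5 := {x | eN x ∈ B}
def dL (l : List ℕ) : Set G5 := {x | eN x ∈ l}

theorem dL_eq (l : List ℕ) : dL l = dSet l.toFinset := by
  ext x; simp [dL, dSet]

theorem mem_FS1_iff (x : G5) : x ∈ AltH1 ↔ x ∈ FS1 := by
  rw [AltH1, MulAction.mem_stabilizer_iff]
  simp only [FS1, Finset.mem_filter, Finset.mem_univ, true_and]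
  rfl

/-- `zpowers c` agrees with an explicit list of powers. -/
theorem zpowers_eq_finset (c : G5) (m : ℕ) (hm : 0 < m) (hc : c ^ m = 1)
    (P : Finset G5) (hP : ∀ k, k < m → c ^ k ∈ P) (hP' : ∀ y ∈ P, y ∈ Subgroup.zpowers c) :
    ∀ y, y ∈ Subgroup.zpowers c ↔ y ∈ P := by
  intro y
  refine ⟨fun hy => ?_, hP' y⟩
  obtain ⟨k, rfl⟩ := Subgroup.mem_zpowers_iff.mp hy
  have hm' : (0 : ℤ) < (m : ℤ) := by exact_mod_cast hm
  have h0 : (0 : ℤ) ≤ k % m := Int.emod_nonneg k (by omega)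
  have hlt : k % m < m := Int.emod_lt_of_pos k hm'
  have h1 : c ^ k = c ^ (k % (m : ℤ)) := by
    conv_lhs => rw [← Int.mul_ediv_add_emod k m]
    rw [zpow_add, zpow_mul, zpow_natCast, hc, one_zpow, one_mul]
  have hkey : c ^ k = c ^ (k % (m : ℤ)).toNat := by
    rw [h1, ← zpow_natCast c (k % (m : ℤ)).toNat, Int.toNat_of_nonneg h0]
  rw [hkey]
  exact hP _ (by omega)

theorem zpowers5_iff : ∀ y, y ∈ Subgroup.zpowers evenFiveCycle ↔ y ∈ PS5 := by
  refine zpowers_eq_finset _ 5 (by norm_num) (by decide) _ (by decide) ?_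
  intro y hy
  simp only [PS5, Finset.mem_insert, Finset.mem_singleton] at hy
  rcases hy with rfl | rfl | rfl | rfl | rfl
  · exact Subgroup.one_mem _
  · exact Subgroup.mem_zpowers _
  · exact Subgroup.pow_mem _ (Subgroup.mem_zpowers _) 2
  · exact Subgroup.pow_mem _ (Subgroup.mem_zpowers _) 3
  · exact Subgroup.pow_mem _ (Subgroup.mem_zpowers _) 4

theorem zpowers3_iff : ∀ y, y ∈ Subgroup.zpowers evenThreeCycle ↔ y ∈ PS3 := by
  refine zpowers_eq_finset _ 3 (by norm_num) (by decide) _ (by decide) ?_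
  intro y hy
  simp only [PS3, Finset.mem_insert, Finset.mem_singleton] at hy
  rcases hy with rfl | rfl | rfl
  · exact Subgroup.one_mem _
  · exact Subgroup.mem_zpowers _
  · exact Subgroup.pow_mem _ (Subgroup.mem_zpowers _) 2

theorem mem_image_eN_iff {P : Finset G5} {u : G5} : u ∈ P ↔ eN u ∈ P.image eN := by
  constructor
  · exact Finset.mem_image_of_mem _
  · intro h
    obtain ⟨v, hv, hev⟩ := Finset.mem_image.mp h
    rwa [← eN_inj hev]

theorem mem_normalizer_zpowers_iff (c : G5) (P : Finset G5)
    (hz : ∀ y, y ∈ Subgroup.zpowers c ↔ y ∈ P) (x : G5) :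
    x ∈ Subgroup.normalizer (Subgroup.zpowers c) ↔ eN (x * c * x⁻¹) ∈ P.image eN := by
  constructor
  · intro hx
    exact mem_image_eN_iff.mp
      ((hz _).mp ((Subgroup.mem_normalizer_iff.mp hx _).mp (Subgroup.mem_zpowers _)))
  · intro hx
    have hconj : x * c * x⁻¹ ∈ Subgroup.zpowers c := (hz _).mpr (mem_image_eN_iff.mpr hx)
    have hS : ∀ n, n ∈ ((Subgroup.zpowers c : Subgroup G5) : Set G5) →
        x * n * x⁻¹ ∈ ((Subgroup.zpowers c : Subgroup G5) : Set G5) := by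
      intro n hn
      obtain ⟨k, rfl⟩ := Subgroup.mem_zpowers_iff.mp hn
      have hck : x * c ^ k * x⁻¹ = (x * c * x⁻¹) ^ k := by
        have := map_zpow (MulAut.conj x) c k
        simpa [MulAut.conj_apply] using this.symm
      rw [SetLike.mem_coe, hck]
      exact Subgroup.zpow_mem _ hconj k
    have h' := Subgroup.mem_normalizer_fintype hS
    exact Subgroup.mem_normalizer_iff.mpr (fun n => by simpa using h' n)

theorem mem_FS2_iff (x : G5) : x ∈ AltH2 ↔ x ∈ FS2 := by
  rw [AltH2, mem_normalizer_zpowers_iff evenFiveCycle PS5 zpowers5_iff x]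
  simp [FS2]

theorem mem_FS3_iff (x : G5) : x ∈ AltH3 ↔ x ∈ FS3 := by
  rw [AltH3, mem_normalizer_zpowers_iff evenThreeCycle PS3 zpowers3_iff x]
  simp [FS3]

theorem coset_d {H : Subgroup G5} {F : Finset G5} (hHF : ∀ x, x ∈ H ↔ x ∈ F) (g : G5) :
    g • (H : Set G5) = dSet (cosetN F g) := by
  ext x
  simp only [dSet, cosetN, Set.mem_smul_set, Set.mem_setOf_eq, Finset.mem_image,
    SetLike.mem_coe, smul_eq_mul]
  constructor
  · rintro ⟨h, hh, rfl⟩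
    exact ⟨h, (hHF h).mp hh, rfl⟩
  · rintro ⟨h, hh, he⟩
    exact ⟨h, (hHF h).mpr hh, eN_inj he⟩

theorem Vmod_iff {B : Finset ℕ} : B ∈ Vmod ↔ ∃ l ∈ Vlist, l.toFinset = B := by
  rw [← keyV]
  simp

theorem mem_Vmod_cases {B : Finset ℕ} (hB : B ∈ Vmod) :
    ∃ g : G5, B = cosetN FS1 g ∨ B = cosetN FS2 g ∨ B = cosetN FS3 g := by
  simp only [Vmod, Finset.mem_union, Finset.mem_image, Finset.mem_univ, true_and] at hB
  rcases hB with (⟨g, h⟩ | ⟨g, h⟩) | ⟨g, h⟩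
  · exact ⟨g, Or.inl h.symm⟩
  · exact ⟨g, Or.inr (Or.inl h.symm)⟩
  · exact ⟨g, Or.inr (Or.inr h.symm)⟩

/-- The subgroup family appearing in the statement. -/
def HFam : Set (Subgroup G5) := {AltH1, AltH2, AltH3}

theorem coset_is_dL (A : Set G5) :
    (∃ g : G5, ∃ K ∈ HFam, A = g • (K : Set G5)) ↔ ∃ l ∈ Vlist, dL l = A := by
  constructor
  · rintro ⟨g, K, hK, rfl⟩
    simp only [HFam, Set.mem_insert_iff, Set.mem_singleton_iff] at hK
    have : ∃ B ∈ Vmod, g • (K : Set G5) = dSet B := by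
      rcases hK with rfl | rfl | rfl
      · exact ⟨cosetN FS1 g, Finset.mem_union_left _ (Finset.mem_union_left _
          (Finset.mem_image_of_mem _ (Finset.mem_univ g))), coset_d mem_FS1_iff g⟩
      · exact ⟨cosetN FS2 g, Finset.mem_union_left _ (Finset.mem_union_right _
          (Finset.mem_image_of_mem _ (Finset.mem_univ g))), coset_d mem_FS2_iff g⟩
      · exact ⟨cosetN FS3 g, Finset.mem_union_right _
          (Finset.mem_image_of_mem _ (Finset.mem_univ g)), coset_d mem_FS3_iff g⟩
    obtain ⟨B, hB, hBeq⟩ := this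
    obtain ⟨l, hl, rfl⟩ := Vmod_iff.mp hB
    exact ⟨l, hl, by rw [dL_eq, ← hBeq]⟩
  · rintro ⟨l, hl, rfl⟩
    obtain ⟨g, hg⟩ := mem_Vmod_cases (Vmod_iff.mpr ⟨l, hl, rfl⟩)
    rcases hg with h | h | h
    · exact ⟨g, AltH1, Or.inl rfl, by rw [dL_eq, h, coset_d mem_FS1_iff]⟩
    · exact ⟨g, AltH2, Or.inr (Or.inl rfl), by rw [dL_eq, h, coset_d mem_FS2_iff]⟩
    · exact ⟨g, AltH3, Or.inr (Or.inr rfl), by rw [dL_eq, h, coset_d mem_FS3_iff]⟩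

theorem Vlist_range {l : List ℕ} (hl : l ∈ Vlist) : ∀ x ∈ l, ∃ y : G5, eN y = x := by
  intro x hx
  obtain ⟨g, hg⟩ := mem_Vmod_cases (Vmod_iff.mpr ⟨l, hl, rfl⟩)
  have hx' : x ∈ l.toFinset := List.mem_toFinset.mpr hx
  rcases hg with h | h | h <;> rw [h] at hx' <;>
    · obtain ⟨y, -, hy⟩ := Finset.mem_image.mp hx'
      exact ⟨_, hy⟩

theorem dL_injOn {l l' : List ℕ} (hl : l ∈ Vlist) (hl' : l' ∈ Vlist) (h : dL l = dL l') :
    l = l' := by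
  refine List.inj_on_of_nodup_map Vlist_map_nodup hl hl' ?_
  ext x
  simp only [List.mem_toFinset]
  constructor
  · intro hx
    obtain ⟨y, rfl⟩ := Vlist_range hl x hx
    have : y ∈ dL l := hx
    rw [h] at this
    exact this
  · intro hx
    obtain ⟨y, rfl⟩ := Vlist_range hl' x hx
    have : y ∈ dL l' := hx
    rw [← h] at this
    exact this

theorem goodT_iff {t : List (List ℕ)} (ht : t ≠ []) :
    goodT t = true ↔ ∃ x : ℕ, ∀ l ∈ t, x ∈ l := by
  match t with
  | [] => exact absurd rfl ht
  | a :: rest =>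
    simp only [goodT, List.any_eq_true, List.all_eq_true, decide_eq_true_eq]
    constructor
    · rintro ⟨x, hxa, hxr⟩
      refine ⟨x, fun l hl => ?_⟩
      rcases List.mem_cons.mp hl with rfl | h
      · exact hxa
      · exact hxr l h
    · rintro ⟨x, hx⟩
      exact ⟨x, hx a List.mem_cons_self, fun b hb => hx b (List.mem_cons_of_mem _ hb)⟩

theorem card_list_subtype {α : Type*} [DecidableEq α] {l : List α} (h : l.Nodup) :
    Nat.card {x // x ∈ l} = l.length := by
  have e : {x // x ∈ l} ≃ {x // x ∈ l.toFinset} :=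
    Equiv.subtypeEquivRight (by simp)
  rw [Nat.card_congr e, Nat.card_eq_fintype_card, Fintype.card_coe,
    List.toFinset_card_of_nodup h]

theorem mem_faces_iff (s : Finset (Set G5)) :
    s ∈ (cosetComplex G5 HFam).faces ↔
      s.Nonempty ∧ (∀ A ∈ s, ∃ g : G5, ∃ K ∈ HFam, A = g • (K : Set G5)) ∧
        (⋂ A ∈ s, (A : Set G5)).Nonempty := Iff.rfl

theorem card_faces (n : ℕ) (hn : 1 ≤ n) :
    Nat.card {s : Finset (Set G5) // s ∈ (cosetComplex G5 HFam).faces ∧ s.card = n}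
      = ((Vlist.sublistsLen n).filter goodT).length := by
  classical
  set EL := (Vlist.sublistsLen n).filter goodT with hEL
  have hELnodup : EL.Nodup := (List.nodup_sublistsLen n Vlist_nodup).filter _
  -- basic facts about members of EL
  have hELfacts : ∀ t ∈ EL, t.Sublist Vlist ∧ t.length = n ∧ goodT t = true := by
    intro t ht
    rw [hEL, List.mem_filter] at ht
    obtain ⟨ht1, ht2⟩ := ht
    obtain ⟨hsub, hlen⟩ := List.mem_sublistsLen.mp ht1
    exact ⟨hsub, hlen, ht2⟩
  -- the map Θ
  have himg_face : ∀ t ∈ EL, ((t.map dL).toFinset ∈ (cosetComplex G5 HFam).faces ∧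
      (t.map dL).toFinset.card = n) := by
    intro t ht
    obtain ⟨hsub, hlen, hgood⟩ := hELfacts t ht
    have htV : ∀ l ∈ t, l ∈ Vlist := fun l hl => hsub.subset hl
    have htnodup : t.Nodup := hsub.nodup Vlist_nodup
    have hmapnodup : (t.map dL).Nodup :=
      (List.Nodup.map_on (fun x hx y hy hxy => dL_injOn (htV x hx) (htV y hy) hxy) htnodup)
    have hcard : (t.map dL).toFinset.card = n := by
      rw [List.toFinset_card_of_nodup hmapnodup, List.length_map, hlen]
    have htne : t ≠ [] := by
      intro h; rw [h] at hlen; simp at hlen; omega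
    refine ⟨(mem_faces_iff _).mpr ⟨?_, ?_, ?_⟩, hcard⟩
    · rw [← Finset.card_pos, hcard]; omega
    · intro A hA
      rw [List.mem_toFinset, List.mem_map] at hA
      obtain ⟨l, hl, rfl⟩ := hA
      exact (coset_is_dL _).mpr ⟨l, htV l hl, rfl⟩
    · obtain ⟨x, hx⟩ := (goodT_iff htne).mp hgood
      obtain ⟨l₀, hl₀⟩ : ∃ l, l ∈ t := by
        cases t with
        | nil => exact absurd rfl htne
        | cons a r => exact ⟨a, List.mem_cons_self⟩
      obtain ⟨y, rfl⟩ := Vlist_range (htV l₀ hl₀) x (hx l₀ hl₀)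
      refine ⟨y, ?_⟩
      simp only [Set.mem_iInter]
      intro A hA
      rw [List.mem_toFinset, List.mem_map] at hA
      obtain ⟨l, hl, rfl⟩ := hA
      exact hx l hl
  let Θ : {t // t ∈ EL} →
      {s : Finset (Set G5) // s ∈ (cosetComplex G5 HFam).faces ∧ s.card = n} :=
    fun t => ⟨(t.1.map dL).toFinset, himg_face t.1 t.2⟩
  have hbij : Function.Bijective Θ := by
    constructor
    · rintro ⟨t, ht⟩ ⟨t', ht'⟩ h
      have h' : (t.map dL).toFinset = (t'.map dL).toFinset := congrArg Subtype.val h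
      obtain ⟨hsub, -, -⟩ := hELfacts t ht
      obtain ⟨hsub', -, -⟩ := hELfacts t' ht'
      have hmem : ∀ x, x ∈ t ↔ x ∈ t' := by
        intro x
        constructor
        · intro hx
          have : dL x ∈ (t'.map dL).toFinset := by
            rw [← h']; simp only [List.mem_toFinset, List.mem_map]; exact ⟨x, hx, rfl⟩
          rw [List.mem_toFinset, List.mem_map] at this
          obtain ⟨x', hx', hxx⟩ := this
          rwa [dL_injOn (hsub'.subset hx') (hsub.subset hx) hxx] at hx'
        · intro hx
          have : dL x ∈ (t.map dL).toFinset := by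
            rw [h']; simp only [List.mem_toFinset, List.mem_map]; exact ⟨x, hx, rfl⟩
          rw [List.mem_toFinset, List.mem_map] at this
          obtain ⟨x', hx', hxx⟩ := this
          rwa [dL_injOn (hsub.subset hx') (hsub'.subset hx) hxx] at hx'
      have : List.Perm t t' := (List.perm_ext_iff_of_nodup (hsub.nodup Vlist_nodup)
        (hsub'.nodup Vlist_nodup)).mpr hmem
      exact Subtype.ext ((List.Nodup.perm_iff_eq_of_sublist Vlist_nodup hsub hsub').mp this)
    · rintro ⟨s, hs, hcard⟩
      obtain ⟨hne, hcosets, hinter⟩ := (mem_faces_iff s).mp hs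
      set t := Vlist.filter (fun l => decide (dL l ∈ (s : Set (Set G5)))) with htdef
      have htsub : t.Sublist Vlist := List.filter_sublist
      have htnodup : t.Nodup := htsub.nodup Vlist_nodup
      have htmem : ∀ l, l ∈ t ↔ l ∈ Vlist ∧ dL l ∈ s := by
        intro l
        rw [htdef, List.mem_filter]
        simp
      have hAll : ∀ A ∈ s, ∃ l ∈ t, dL l = A := by
        intro A hA
        obtain ⟨l, hl, hdl⟩ := (coset_is_dL A).mp (hcosets A hA)
        exact ⟨l, (htmem l).mpr ⟨hl, by rwa [hdl]⟩, hdl⟩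
      have himg : (t.map dL).toFinset = s := by
        apply Finset.ext
        intro A
        rw [List.mem_toFinset, List.mem_map]
        constructor
        · rintro ⟨l, hl, rfl⟩
          exact ((htmem l).mp hl).2
        · intro hA
          obtain ⟨l, hl, hdl⟩ := hAll A hA
          exact ⟨l, hl, hdl⟩
      have hmapnodup : (t.map dL).Nodup :=
        List.Nodup.map_on
          (fun x hx y hy hxy =>
            dL_injOn ((htmem x).mp hx).1 ((htmem y).mp hy).1 hxy) htnodup
      have hlen : t.length = n := by
        have := congrArg Finset.card himg
        rwa [List.toFinset_card_of_nodup hmapnodup, List.length_map, hcard] at this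
      have htne : t ≠ [] := by
        intro h
        rw [h] at hlen
        simp at hlen
        omega
      have hgood : goodT t = true := by
        rw [goodT_iff htne]
        obtain ⟨y, hy⟩ := hinter
        simp only [Set.mem_iInter] at hy
        refine ⟨eN y, fun l hl => ?_⟩
        have : y ∈ dL l := hy (dL l) (((htmem l).mp hl).2)
        exact this
      have htEL : t ∈ EL := by
        rw [hEL, List.mem_filter]
        exact ⟨List.mem_sublistsLen.mpr ⟨htsub, hlen⟩, hgood⟩
      exact ⟨⟨t, htEL⟩, Subtype.ext himg⟩
  rw [← Nat.card_eq_of_bijective Θ hbij, card_list_subtype hELnodup]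

theorem vertices_iff (A : Set G5) :
    A ∈ (cosetComplex G5 HFam).vertices ↔ ∃ l ∈ Vlist, dL l = A := by
  rw [← coset_is_dL]
  constructor
  · intro hA
    obtain ⟨-, hco, -⟩ := (mem_faces_iff {A}).mp hA
    exact hco A (Finset.mem_singleton_self A)
  · rintro ⟨g, K, hK, rfl⟩
    refine (mem_faces_iff {g • (K : Set G5)}).mpr ⟨Finset.singleton_nonempty _, ?_, ?_⟩
    · intro B hB
      rw [Finset.mem_singleton] at hB
      exact ⟨g, K, hK, hB⟩
    · have : (⋂ B ∈ ({g • (K : Set G5)} : Finset (Set G5)), B) = g • (K : Set G5) := by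
        simp
      rw [this]
      exact ⟨g, ⟨1, K.one_mem, mul_one g⟩⟩

theorem card_vertices :
    Nat.card {A : Set G5 // A ∈ (cosetComplex G5 HFam).vertices} = Vlist.length := by
  classical
  let Θ : {l // l ∈ Vlist} → {A : Set G5 // A ∈ (cosetComplex G5 HFam).vertices} :=
    fun l => ⟨dL l.1, (vertices_iff _).mpr ⟨l.1, l.2, rfl⟩⟩
  have hbij : Function.Bijective Θ := by
    constructor
    · rintro ⟨l, hl⟩ ⟨l', hl'⟩ h
      exact Subtype.ext (dL_injOn hl hl' (congrArg Subtype.val h))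
    · rintro ⟨A, hA⟩
      obtain ⟨l, hl, hdl⟩ := (vertices_iff A).mp hA
      exact ⟨⟨l, hl⟩, Subtype.ext hdl⟩
  rw [← Nat.card_eq_of_bijective Θ hbij, card_list_subtype Vlist_nodup]
/-- the coset complex `CC(Alt₅, {H₁, H₂, H₃})` has exactly `21`
vertices, `80` edges and `60` two-dimensional simplices. -/
theorem statement13 :
    Nat.card {A : Set ↥(alternatingGroup (Fin 5)) //
        A ∈ (cosetComplex ↥(alternatingGroup (Fin 5)) {AltH1, AltH2, AltH3}).vertices} = 21 ∧
    Nat.card {s : Finset (Set ↥(alternatingGroup (Fin 5))) //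
        s ∈ (cosetComplex ↥(alternatingGroup (Fin 5)) {AltH1, AltH2, AltH3}).faces ∧
        s.card = 2} = 80 ∧
    Nat.card {s : Finset (Set ↥(alternatingGroup (Fin 5))) //
        s ∈ (cosetComplex ↥(alternatingGroup (Fin 5)) {AltH1, AltH2, AltH3}).faces ∧
        s.card = 3} = 60 := by

  refine ⟨?_, ?_, ?_⟩
  · exact (card_vertices).trans (by decide)
  · exact (card_faces 2 (by norm_num)).trans (by decide)
  · exact (card_faces 3 (by norm_num)).trans (by decide)
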